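/- arXiv:2502.04872 — 5 statements merged into one kernel-verified Lean document; each statement's English description precedes it below -/
import Mathlib

section
/- Let I be a monomial ideal in a polynomial ring R over a field, W a subset of the variables, and n ≥ 1 an integer. Then the restriction of the n-th power equals the n-th power of the restriction: (I^n)|_W = (I|_W)^n. -/
open MvPolynomial Pointwise

/-- `I` is a monomial ideal: it is generated by a set of monomials. -/
def IsMonomialIdeal {K : Type*} [Field K] {σ : Type*} (I : Ideal (MvPolynomial σ K)) : Prop :=
  ∃ S : Set (σ →₀ ℕ), I = Ideal.span ((fun s => (monomial s (1 : K))) '' S)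

/-- The restriction `I|_W` of a monomial ideal `I` to a set of variables `W`: the ideal
generated by the monomials of `I` whose support is contained in `W`; for a monomial ideal
this is exactly the ideal generated by the minimal monomial generators of `I` with support
contained in `W`. -/
noncomputable def Ideal.restrictVars {K : Type*} [Field K] {σ : Type*} (I : Ideal (MvPolynomial σ K))
    (W : Set σ) : Ideal (MvPolynomial σ K) :=
  Ideal.span {f | ∃ s : σ →₀ ℕ, f = monomial s (1 : K) ∧ f ∈ I ∧ ↑s.support ⊆ W}

/-- The pointwise `n`-th power of a set of monomials is the set of monomials indexed by
`n`-fold sums. -/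
lemma image_monomial_pow {K : Type*} [Field K] {σ : Type*} (S : Set (σ →₀ ℕ)) (n : ℕ) :
    ((fun s => (monomial s (1 : K))) '' S : Set (MvPolynomial σ K)) ^ n
      = (fun s => (monomial s (1 : K))) ''
        {t | ∃ f : Fin n → (σ →₀ ℕ), (∀ i, f i ∈ S) ∧ ∑ i, f i = t} := by
  ext x
  rw [Set.mem_pow]
  constructor
  · rintro ⟨g, rfl⟩
    choose f hf hfe using fun i => (g i).2
    refine ⟨∑ i, f i, ⟨f, hf, rfl⟩, ?_⟩
    show monomial (∑ i, f i) (1 : K) = _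
    rw [monomial_sum_one, List.prod_ofFn]
    exact Finset.prod_congr rfl fun i _ => hfe i
  · rintro ⟨t, ⟨f, hf, rfl⟩, rfl⟩
    refine ⟨fun i => ⟨monomial (f i) 1, ⟨f i, hf i, rfl⟩⟩, ?_⟩
    rw [List.prod_ofFn, ← monomial_sum_one]

lemma prod_mem_ideal_pow {R : Type*} [CommRing R] (J : Ideal R) {n : ℕ} {a : Fin n → R}
    (h : ∀ i, a i ∈ J) : ∏ i, a i ∈ J ^ n := by
  have : J ^ n = ∏ _i : Fin n, J := by
    rw [Finset.prod_const, Finset.card_univ, Fintype.card_fin]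
  rw [this]
  exact Ideal.prod_mem_prod fun i _ => h i

/-- The restriction of a power of a monomial ideal is the power of the restriction:
`(I^n)|_W = (I|_W)^n` for all `n ≥ 1`. -/
theorem restrictVars_pow {K : Type*} [Field K] {σ : Type*}
    (I : Ideal (MvPolynomial σ K)) (hI : IsMonomialIdeal I) (W : Set σ)
    (n : ℕ) (hn : 1 ≤ n) :
    (I ^ n).restrictVars W = (I.restrictVars W) ^ n := by
  obtain ⟨S, rfl⟩ := hI
  apply le_antisymm
  · -- (I^n)|_W ≤ (I|_W)^n
    rw [Ideal.restrictVars, Ideal.span_le]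
    rintro f ⟨m, rfl, hfI, hsupp⟩
    have h1 : (Ideal.span ((fun s => (monomial s (1 : K))) '' S)) ^ n
        = Ideal.span ((fun s => (monomial s (1 : K))) ''
          {t | ∃ f : Fin n → (σ →₀ ℕ), (∀ i, f i ∈ S) ∧ ∑ i, f i = t}) := by
      rw [Ideal.span, Submodule.span_pow, image_monomial_pow]
    rw [h1, mem_ideal_span_monomial_image] at hfI
    classical
    have hm : m ∈ (monomial m (1 : K)).support := by
      rw [mem_support_iff, coeff_monomial, if_pos rfl]
      exact one_ne_zero
    obtain ⟨t, ⟨g, hg, rfl⟩, hle⟩ := hfI m hm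
    -- each g i ≤ m
    have hgle : ∀ i, g i ≤ m := fun i =>
      le_trans (Finset.single_le_sum (f := g) (fun j _ => zero_le) (Finset.mem_univ i)) hle
    have key : monomial (∑ i, g i) (1 : K) ∈ ((Ideal.span ((fun s => (monomial s (1 : K))) '' S)).restrictVars W) ^ n := by
      rw [monomial_sum_one]
      refine prod_mem_ideal_pow _ fun i => ?_
      refine Ideal.subset_span ⟨g i, rfl, Ideal.subset_span ⟨g i, hg i, rfl⟩, ?_⟩
      exact subset_trans (Finset.coe_subset.mpr (Finsupp.support_mono (hgle i))) hsupp
    have : monomial m (1 : K)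
        = monomial (m - ∑ i, g i) (1 : K) * monomial (∑ i, g i) (1 : K) := by
      rw [monomial_mul, mul_one, tsub_add_cancel_of_le hle]
    rw [this]
    exact Ideal.mul_mem_left _ _ key
  · -- (I|_W)^n ≤ (I^n)|_W
    rw [Ideal.restrictVars, Ideal.span, Submodule.span_pow, Submodule.span_le]
    intro x hx
    rw [Set.mem_pow] at hx
    obtain ⟨g, rfl⟩ := hx
    choose s hs hmem hsupp using fun i => (g i).2
    have hx2 : (List.ofFn fun i => ((g i : MvPolynomial σ K))).prod
        = monomial (∑ i, s i) (1 : K) := by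
      rw [List.prod_ofFn, monomial_sum_one]
      exact (Finset.prod_congr rfl fun i _ => by rw [hs i]).symm
    rw [hx2]
    refine Ideal.subset_span ⟨∑ i, s i, rfl, ?_, ?_⟩
    · rw [monomial_sum_one]
      exact prod_mem_ideal_pow _ fun i => (hs i) ▸ hmem i
    · intro v hv
      obtain ⟨j, hj⟩ := Finset.mem_coe.mp hv |> Finsupp.mem_support_finset_sum v
      exact hsupp j (Finset.mem_coe.mpr hj.2)
end

section
/- Let G be a graph on vertices {x_1,...,x_t, y_1,...,y_t} satisfying: (1*) x_i y_i ∈ E(G) for all i; (2*) if x_i y_j ∈ E(G) then i ≤ j; (3*) if x_i y_j ∈ E(G) then x_i x_j ∉ E(G); (4*) if x_i y_k and x_k y_j are edges with i, j, k distinct, then x_i y_j ∈ E(G); (5*) if x_i y_k and x_k x_j are edges with i, j, k distinct, then x_i x_j ∈ E(G); and assume Y = {y_1,...,y_t} is an independent set and every maximal independent set of G has cardinality t. Then for every k ∈ {1,...,t}, every maximal independent set T of G contains exactly one of x_k and y_k. -/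
open Sum

/-- `T` is an independent set of the graph `G`. -/
def IndepSet {V : Type*} (G : SimpleGraph V) (T : Set V) : Prop :=
  ∀ u ∈ T, ∀ v ∈ T, ¬ G.Adj u v

/-- `T` is a maximal independent set of the graph `G`. -/
def MaximalIndepSet {V : Type*} (G : SimpleGraph V) (T : Set V) : Prop :=
  IndepSet G T ∧ ∀ T' : Set V, IndepSet G T' → T ⊆ T' → T' = T

/-- For a graph on `{x_1,...,x_t,y_1,...,y_t}` satisfying conditions (1*)–(5*), with
`Y = {y_1,...,y_t}` independent and every maximal independent set of cardinality `t`,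
every maximal independent set contains exactly one of `x_k` and `y_k` for each `k`. -/
theorem maximalIndep_contains_exactly_one (t : ℕ) (G : SimpleGraph (Fin t ⊕ Fin t))
    (h1 : ∀ i, G.Adj (inl i) (inr i))
    (h2 : ∀ i j, G.Adj (inl i) (inr j) → i ≤ j)
    (h3 : ∀ i j, G.Adj (inl i) (inr j) → ¬ G.Adj (inl i) (inl j))
    (h4 : ∀ i j k, i ≠ j → j ≠ k → i ≠ k →
      G.Adj (inl i) (inr k) → G.Adj (inl k) (inr j) → G.Adj (inl i) (inr j))
    (h5 : ∀ i j k, i ≠ j → j ≠ k → i ≠ k →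
      G.Adj (inl i) (inr k) → G.Adj (inl k) (inl j) → G.Adj (inl i) (inl j))
    (hY : ∀ i j, ¬ G.Adj (inr i) (inr j))
    (hwc : ∀ T : Set (Fin t ⊕ Fin t), MaximalIndepSet G T → T.ncard = t) :
    ∀ (k : Fin t) (T : Set (Fin t ⊕ Fin t)), MaximalIndepSet G T →
      ((inl k ∈ T ∧ inr k ∉ T) ∨ (inl k ∉ T ∧ inr k ∈ T)) := by
  intro k T hT
  have hInd := hT.1
  have hinj : Set.InjOn (Sum.elim id id : Fin t ⊕ Fin t → Fin t) T := by
    rintro (i|i) hi (j|j) hj hij <;> simp only [Sum.elim_inl, Sum.elim_inr, id] at hij <;>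
      subst hij
    · rfl
    · exact absurd (h1 i) (hInd _ hi _ hj)
    · exact absurd (h1 i) (fun h => hInd _ hi _ hj h.symm)
    · rfl
  have himg : ((Sum.elim id id : Fin t ⊕ Fin t → Fin t) '' T).ncard = t := by
    rw [Set.ncard_image_of_injOn hinj, hwc T hT]
  have huniv : (Sum.elim id id : Fin t ⊕ Fin t → Fin t) '' T = Set.univ := by
    apply Set.eq_of_subset_of_ncard_le (Set.subset_univ _)
    simp [Set.ncard_univ, himg]
  have hk : k ∈ (Sum.elim id id : Fin t ⊕ Fin t → Fin t) '' T := by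
    rw [huniv]; trivial
  obtain ⟨a, ha, hfa⟩ := hk
  match a with
  | inl i =>
    simp only [Sum.elim_inl, id] at hfa; subst hfa
    exact Or.inl ⟨ha, fun h => hInd _ ha _ h (h1 i)⟩
  | inr i =>
    simp only [Sum.elim_inr, id] at hfa; subst hfa
    exact Or.inr ⟨fun h => hInd _ h _ ha (h1 i), ha⟩
end

section
/- Let G be a graph on vertices {x_1,...,x_t, y_1,...,y_t}, t ≥ 1, satisfying conditions (1*)–(5*): x_i y_i ∈ E(G) for all i; if x_i y_j ∈ E(G) then i ≤ j; if x_i y_j ∈ E(G) then x_i x_j ∉ E(G); if x_i y_k, x_k y_j ∈ E(G) with i,j,k distinct then x_i y_j ∈ E(G); if x_i y_k, x_k x_j ∈ E(G) with i,j,k distinct then x_i x_j ∈ E(G); and assume Y = {y_1,...,y_t} is independent with no edges among or into it except those of the form x_i y_j. Then G has at least two leaf vertices (vertices of degree 1). -/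
open Sum

/-- A graph on `{x_1,...,x_t,y_1,...,y_t}`, `t ≥ 1`, satisfying conditions (1*)–(5*),
in which `Y = {y_1,...,y_t}` is independent (so every edge has the form `x_i x_j` or
`x_i y_j`), has at least two leaf vertices (vertices of degree 1). -/
theorem exists_two_leaves (t : ℕ) (ht : 1 ≤ t) (G : SimpleGraph (Fin t ⊕ Fin t))
    [DecidableRel G.Adj]
    (h1 : ∀ i, G.Adj (inl i) (inr i))
    (h2 : ∀ i j, G.Adj (inl i) (inr j) → i ≤ j)
    (h3 : ∀ i j, G.Adj (inl i) (inr j) → ¬ G.Adj (inl i) (inl j))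
    (h4 : ∀ i j k, i ≠ j → j ≠ k → i ≠ k →
      G.Adj (inl i) (inr k) → G.Adj (inl k) (inr j) → G.Adj (inl i) (inr j))
    (h5 : ∀ i j k, i ≠ j → j ≠ k → i ≠ k →
      G.Adj (inl i) (inr k) → G.Adj (inl k) (inl j) → G.Adj (inl i) (inl j))
    (hY : ∀ i j, ¬ G.Adj (inr i) (inr j)) :
    ∃ u v : Fin t ⊕ Fin t, u ≠ v ∧ G.degree u = 1 ∧ G.degree v = 1 := by
  classical
  set z0 : Fin t := ⟨0, ht⟩ with hz0def
  have hz0v : z0.val = 0 := rfl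
  -- if the only x-neighbor of y_k is x_k, then y_k is a leaf
  have degY : ∀ k : Fin t, (∀ i, G.Adj (inl i) (inr k) → i = k) →
      G.degree (inr k) = 1 := by
    intro k hk
    have hnb : G.neighborFinset (inr k) = {inl k} := by
      ext v
      simp only [SimpleGraph.mem_neighborFinset, Finset.mem_singleton]
      constructor
      · intro hv
        cases v with
        | inl i => exact congrArg inl (hk i hv.symm)
        | inr j => exact absurd hv (hY k j)
      · rintro rfl; exact (h1 k).symm
    rw [SimpleGraph.degree, hnb, Finset.card_singleton]
  -- y_0 is a leaf
  have hdeg0 : G.degree (inr z0) = 1 := by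
    apply degY
    intro i hi
    have hle := h2 i z0 hi
    rw [Fin.le_def] at hle
    exact Fin.ext (by omega)
  by_cases hc : ∃ k : Fin t, k ≠ z0 ∧ ∀ i, G.Adj (inl i) (inr k) → i = k
  · -- some other y_k is a leaf
    obtain ⟨k, hk0, hk⟩ := hc
    exact ⟨inr z0, inr k, fun h => hk0 (inr_injective h).symm, hdeg0, degY k hk⟩
  · push_neg at hc
    -- every y_k (k ≠ 0) has a neighbor x_i with i < k; deduce x_0 ~ y_k for all k ≠ 0
    have claim : ∀ n : ℕ, ∀ k : Fin t, k.val ≤ n → k ≠ z0 → G.Adj (inl z0) (inr k) := by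
      intro n
      induction n with
      | zero =>
        intro k hk hne
        exact absurd (Fin.ext (by omega)) hne
      | succ n ih =>
        intro k hk hne
        obtain ⟨i, hadj, hik⟩ := hc k hne
        have hle := h2 i k hadj
        rw [Fin.le_def] at hle
        have hvne : i.val ≠ k.val := fun h => hik (Fin.ext h)
        by_cases hi0 : i = z0
        · rwa [hi0] at hadj
        · have h0i := ih i (by omega) hi0
          exact h4 z0 k i (Ne.symm hne) (Ne.symm hik) (Ne.symm hi0) h0i hadj
    -- x_{t-1} is a leaf
    set lst : Fin t := ⟨t - 1, by omega⟩ with hlstdef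
    have hlstv : lst.val = t - 1 := rfl
    have hdegl : G.degree (inl lst) = 1 := by
      have hnb : G.neighborFinset (inl lst) = {inr lst} := by
        ext v
        simp only [SimpleGraph.mem_neighborFinset, Finset.mem_singleton]
        constructor
        · intro hv
          cases v with
          | inr j =>
            have hle := h2 lst j hv
            rw [Fin.le_def] at hle
            have : j.val < t := j.isLt
            exact congrArg inr (Fin.ext (by simp only [hlstdef] at hle ⊢; omega)).symm
          | inl j =>
            exfalso
            have hjl : j ≠ lst := by
              rintro rfl
              exact G.irrefl hv
            by_cases hl0 : lst = z0
            · -- then t = 1 and j = lst, contradiction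
              have := congrArg Fin.val hl0
              simp only [hlstdef, hz0def] at this
              have hj : j.val < t := j.isLt
              exact hjl (Fin.ext (by omega))
            · have h0last := claim t lst (by omega) hl0
              by_cases hj0 : j = z0
              · subst hj0
                exact h3 z0 lst h0last hv.symm
              · have h0j := claim t j (by omega) hj0
                exact h3 z0 j h0j
                  (h5 z0 j lst (Ne.symm hj0) hjl (Ne.symm hl0) h0last hv)
        · rintro rfl; exact h1 lst
      rw [SimpleGraph.degree, hnb, Finset.card_singleton]
    exact ⟨inr z0, inl lst, fun h => by simp at h, hdeg0, hdegl⟩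
end

section
/- Let G be a graph on vertices {x_1,...,x_t, y_1,...,y_t} satisfying conditions (1*)–(5*) of a Cohen-Macaulay very well-covered graph. If G has exactly two leaf vertices, then G is bipartite. -/
open Sum

section Aux

variable {t : ℕ} (G : SimpleGraph (Fin t ⊕ Fin t)) [DecidableRel G.Adj]

/-- auxiliary order relation `i ≼ j` -/
def LeR (i j : Fin t) : Prop := G.Adj (inl i) (inr j) ∨ i = j

instance : DecidableRel (LeR G) :=
  fun i j => decidable_of_iff (G.Adj (inl i) (inr j) ∨ i = j) Iff.rfl

lemma leR_refl (i : Fin t) : LeR G i i := Or.inr rfl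

lemma leR_le (h2 : ∀ i j, G.Adj (inl i) (inr j) → i ≤ j) {i j : Fin t}
    (h : LeR G i j) : i ≤ j := by
  rcases h with h | rfl
  · exact h2 i j h
  · exact le_refl i

lemma leR_trans
    (h4 : ∀ i j k, i ≠ j → j ≠ k → i ≠ k →
      G.Adj (inl i) (inr k) → G.Adj (inl k) (inr j) → G.Adj (inl i) (inr j))
    {i k j : Fin t} (hik : LeR G i k) (hkj : LeR G k j) : LeR G i j := by
  rcases hik with hik | rfl
  · rcases hkj with hkj | rfl
    · by_cases hij : i = j
      · exact Or.inr hij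
      · by_cases hik' : i = k
        · exact Or.inl (by rw [hik']; exact hkj)
        · by_cases hkj' : k = j
          · exact Or.inl (by rw [← hkj']; exact hik)
          · exact Or.inl (h4 i j k hij (fun h => hkj' h.symm) hik' hik hkj)
    · exact Or.inl hik
  · exact hkj

/-- no common lower bound for an `x`-`x` edge -/
lemma nolb
    (h3 : ∀ i j, G.Adj (inl i) (inr j) → ¬ G.Adj (inl i) (inl j))
    (h5 : ∀ i j k, i ≠ j → j ≠ k → i ≠ k →
      G.Adj (inl i) (inr k) → G.Adj (inl k) (inl j) → G.Adj (inl i) (inl j))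
    {a b m : Fin t} (hab : G.Adj (inl a) (inl b))
    (hma : LeR G m a) (hmb : LeR G m b) : False := by
  have hne : a ≠ b := by rintro rfl; exact (G.loopless.irrefl _) hab
  by_cases hma' : m = a
  · subst hma'
    rcases hmb with hmb | rfl
    · exact h3 _ _ hmb hab
    · exact hne rfl
  · by_cases hmb' : m = b
    · subst hmb'
      rcases hma with hma | rfl
      · exact h3 _ _ hma hab.symm
      · exact hne rfl
    · rcases hma with hma | rfl
      · rcases hmb with hmb | rfl
        · exact h3 m b hmb (h5 m b a hmb' hne.symm hma' hma hab)
        · exact hmb' rfl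
      · exact hma' rfl

lemma exists_min
    (h2 : ∀ i j, G.Adj (inl i) (inr j) → i ≤ j)
    (h4 : ∀ i j k, i ≠ j → j ≠ k → i ≠ k →
      G.Adj (inl i) (inr k) → G.Adj (inl k) (inr j) → G.Adj (inl i) (inr j))
    (j : Fin t) : ∃ m, LeR G m j ∧ ∀ i, G.Adj (inl i) (inr m) → i = m := by
  classical
  set F : Finset (Fin t) := Finset.univ.filter (fun m => LeR G m j) with hF
  have hjF : j ∈ F := by simp [hF, leR_refl]
  have hFne : F.Nonempty := ⟨j, hjF⟩
  refine ⟨F.min' hFne, ?_, ?_⟩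
  · have := F.min'_mem hFne
    simp [hF] at this
    exact this
  · intro i hi
    have hmj : LeR G (F.min' hFne) j := by
      have := F.min'_mem hFne
      simp [hF] at this
      exact this
    have hij : LeR G i j := leR_trans G h4 (Or.inl hi) hmj
    have hiF : i ∈ F := by simp [hF, hij]
    have h1 : F.min' hFne ≤ i := F.min'_le i hiF
    have h2' : i ≤ F.min' hFne := h2 i _ hi
    exact le_antisymm h2' h1

lemma exists_max
    (h2 : ∀ i j, G.Adj (inl i) (inr j) → i ≤ j)
    (h4 : ∀ i j k, i ≠ j → j ≠ k → i ≠ k →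
      G.Adj (inl i) (inr k) → G.Adj (inl k) (inr j) → G.Adj (inl i) (inr j))
    (j : Fin t) : ∃ J, LeR G j J ∧ ∀ k, G.Adj (inl J) (inr k) → k = J := by
  classical
  set F : Finset (Fin t) := Finset.univ.filter (fun k => LeR G j k) with hF
  have hjF : j ∈ F := by simp [hF, leR_refl]
  have hFne : F.Nonempty := ⟨j, hjF⟩
  refine ⟨F.max' hFne, ?_, ?_⟩
  · have := F.max'_mem hFne
    simp [hF] at this
    exact this
  · intro k hk
    have hjJ : LeR G j (F.max' hFne) := by
      have := F.max'_mem hFne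
      simp [hF] at this
      exact this
    have hjk : LeR G j k := leR_trans G h4 hjJ (Or.inl hk)
    have hkF : k ∈ F := by simp [hF, hjk]
    have hle : k ≤ F.max' hFne := F.le_max' k hkF
    exact le_antisymm hle (h2 _ k hk)

lemma deg_y
    (h1 : ∀ i, G.Adj (inl i) (inr i))
    (hY : ∀ i j, ¬ G.Adj (inr i) (inr j))
    {m : Fin t} (hm : ∀ i, G.Adj (inl i) (inr m) → i = m) :
    G.degree (inr m) = 1 := by
  have hnb : G.neighborFinset (inr m) = {inl m} := by
    ext v
    simp only [SimpleGraph.mem_neighborFinset, Finset.mem_singleton]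
    constructor
    · intro hv
      rcases v with i | k
      · exact congrArg inl (hm i hv.symm)
      · exact absurd hv (hY m k)
    · rintro rfl
      exact (h1 m).symm
  show (G.neighborFinset (inr m)).card = 1
  rw [hnb]
  simp

lemma deg_x
    (h1 : ∀ i, G.Adj (inl i) (inr i))
    {J : Fin t} (hJmax : ∀ k, G.Adj (inl J) (inr k) → k = J)
    (hnoxx : ∀ k, ¬ G.Adj (inl J) (inl k)) :
    G.degree (inl J) = 1 := by
  have hnb : G.neighborFinset (inl J) = {inr J} := by
    ext v
    simp only [SimpleGraph.mem_neighborFinset, Finset.mem_singleton]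
    constructor
    · intro hv
      rcases v with k | k
      · exact absurd hv (hnoxx k)
      · exact congrArg inr (hJmax k hv)
    · rintro rfl
      exact h1 J
  show (G.neighborFinset (inl J)).card = 1
  rw [hnb]
  simp

end Aux

/-- A Cohen–Macaulay very well-covered graph on `{x_1,...,x_t,y_1,...,y_t}`
(conditions (1*)–(5*), `Y` independent, every maximal independent set of cardinality `t`)
having exactly two leaf vertices is bipartite. -/
theorem bipartite_of_two_leaves (t : ℕ) (G : SimpleGraph (Fin t ⊕ Fin t))
    [DecidableRel G.Adj]
    (h1 : ∀ i, G.Adj (inl i) (inr i))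
    (h2 : ∀ i j, G.Adj (inl i) (inr j) → i ≤ j)
    (h3 : ∀ i j, G.Adj (inl i) (inr j) → ¬ G.Adj (inl i) (inl j))
    (h4 : ∀ i j k, i ≠ j → j ≠ k → i ≠ k →
      G.Adj (inl i) (inr k) → G.Adj (inl k) (inr j) → G.Adj (inl i) (inr j))
    (h5 : ∀ i j k, i ≠ j → j ≠ k → i ≠ k →
      G.Adj (inl i) (inr k) → G.Adj (inl k) (inl j) → G.Adj (inl i) (inl j))
    (hY : ∀ i j, ¬ G.Adj (inr i) (inr j))
    (hwc : ∀ T : Set (Fin t ⊕ Fin t), MaximalIndepSet G T → T.ncard = t)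
    (hleaf : {v : Fin t ⊕ Fin t | G.degree v = 1}.ncard = 2) :
    G.Colorable 2 := by
  by_cases hE : ∀ a b, ¬ G.Adj (inl a) (inl b)
  · refine ⟨SimpleGraph.Coloring.mk (Sum.elim (fun _ => (0 : Fin 2)) (fun _ => 1)) ?_⟩
    rintro (i | i) (j | j) hadj
    · exact absurd hadj (hE i j)
    · simp
    · simp
    · exact absurd hadj (hY i j)
  · push_neg at hE
    obtain ⟨a, b, hab⟩ := hE
    obtain ⟨m1, hm1a, hm1min⟩ := exists_min G h2 h4 a
    obtain ⟨m2, hm2b, hm2min⟩ := exists_min G h2 h4 b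
    have hne : m1 ≠ m2 := by
      rintro rfl
      exact nolb G h3 h5 hab hm1a hm2b
    -- the leaf set is exactly {y_{m1}, y_{m2}}
    have hS : ({inr m1, inr m2} : Set (Fin t ⊕ Fin t)) =
        {v : Fin t ⊕ Fin t | G.degree v = 1} := by
      apply Set.eq_of_subset_of_ncard_le
      · rintro v (rfl | rfl)
        · exact deg_y G h1 hY hm1min
        · exact deg_y G h1 hY hm2min
      · rw [hleaf, Set.ncard_pair (by simp [hne])]
      · exact Set.toFinite _
    have hminmem : ∀ m : Fin t, (∀ i, G.Adj (inl i) (inr m) → i = m) →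
        m = m1 ∨ m = m2 := by
      intro m hm
      have : (inr m : Fin t ⊕ Fin t) ∈ {v : Fin t ⊕ Fin t | G.degree v = 1} :=
        deg_y G h1 hY hm
      rw [← hS] at this
      simpa using this
    -- no common upper bound of m1 and m2
    have hkey : ∀ j, LeR G m1 j → LeR G m2 j → False := by
      intro j hj1 hj2
      obtain ⟨J, hjJ, hJmax⟩ := exists_max G h2 h4 j
      have h1J : LeR G m1 J := leR_trans G h4 hj1 hjJ
      have h2J : LeR G m2 J := leR_trans G h4 hj2 hjJ
      have hnoxx : ∀ k, ¬ G.Adj (inl J) (inl k) := by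
        intro k hk
        obtain ⟨mk, hmkk, hmkmin⟩ := exists_min G h2 h4 k
        rcases hminmem mk hmkmin with rfl | rfl
        · exact nolb G h3 h5 hk h1J hmkk
        · exact nolb G h3 h5 hk h2J hmkk
      have hdeg : G.degree (inl J) = 1 := deg_x G h1 hJmax hnoxx
      have : (inl J : Fin t ⊕ Fin t) ∈ {v : Fin t ⊕ Fin t | G.degree v = 1} := hdeg
      rw [← hS] at this
      simpa using this
    -- every i lies above m1 or m2
    have hcover : ∀ i : Fin t, ¬ LeR G m1 i → LeR G m2 i := by
      intro i hi
      obtain ⟨mi, hmii, hmimin⟩ := exists_min G h2 h4 i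
      rcases hminmem mi hmimin with rfl | rfl
      · exact absurd hmii hi
      · exact hmii
    refine ⟨SimpleGraph.Coloring.mk
      (Sum.elim (fun i => if LeR G m1 i then (0 : Fin 2) else 1)
        (fun i => if LeR G m1 i then (1 : Fin 2) else 0)) ?_⟩
    rintro (i | i) (j | j) hadj <;>
      simp only [Sum.elim_inl, Sum.elim_inr]
    · by_cases p : LeR G m1 i <;> by_cases q : LeR G m1 j
      · exact (nolb G h3 h5 hadj p q).elim
      · rw [if_pos p, if_neg q]; decide
      · rw [if_neg p, if_pos q]; decide
      · exact (nolb G h3 h5 hadj (hcover i p) (hcover j q)).elim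
    · have hij : LeR G i j := Or.inl hadj
      have hiff : LeR G m1 i ↔ LeR G m1 j := by
        constructor
        · intro p
          exact leR_trans G h4 p hij
        · intro q
          by_contra p
          exact hkey j q (leR_trans G h4 (hcover i p) hij)
      by_cases p : LeR G m1 i
      · rw [if_pos p, if_pos (hiff.mp p)]; decide
      · rw [if_neg p, if_neg (fun q => p (hiff.mpr q))]; decide
    · have hij : LeR G j i := Or.inl hadj.symm
      have hiff : LeR G m1 j ↔ LeR G m1 i := by
        constructor
        · intro p
          exact leR_trans G h4 p hij
        · intro q
          by_contra p
          exact hkey i q (leR_trans G h4 (hcover j p) hij)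
      by_cases p : LeR G m1 j
      · rw [if_pos (hiff.mp p), if_pos p]; decide
      · rw [if_neg (fun q : LeR G m1 i => p (hiff.mpr q)), if_neg p]; decide
    · exact absurd hadj (hY i j)
end

section
/- Let R = K[a,b,x,y] and I = ((ax)^p, (ab)^k, (by)^q) with positive integers p, q, k satisfying min{p,q} ≥ 2k. Then for every n ≥ 1, the n-th ordinary power of I equals its n-th symbolic power; concretely, I^n = (a^k b^k, a^p, b^q)^n ∩ (a^k, y^q)^n ∩ (b^k, x^p)^n. -/
open MvPolynomial

lemma key_arith (k p q n A B C D i1 j1 l1 i2 l2 i3 j3 : ℕ)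
    (hp2 : 2*k ≤ p) (hq2 : 2*k ≤ q)
    (hs1 : i1 + j1 + l1 = n) (hA1 : k*i1 + p*j1 ≤ A) (hB1 : k*i1 + q*l1 ≤ B)
    (hs2 : i2 + l2 = n) (hA2 : k*i2 ≤ A) (hD2 : q*l2 ≤ D)
    (hs3 : i3 + j3 = n) (hB3 : k*i3 ≤ B) (hC3 : p*j3 ≤ C) :
    ∃ i j l, i + j + l = n ∧ k*i + p*j ≤ A ∧ k*i + q*l ≤ B ∧ p*j ≤ C ∧ q*l ≤ D := by
  rcases le_or_gt l1 l2 with hl | hl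
  · rcases le_or_gt j1 j3 with hj | hj
    · exact ⟨i1, j1, l1, hs1, hA1, hB1,
        le_trans (Nat.mul_le_mul_left p hj) hC3, le_trans (Nat.mul_le_mul_left q hl) hD2⟩
    · obtain ⟨f, rfl⟩ : ∃ f, j1 = j3 + f := ⟨j1 - j3, by omega⟩
      rcases le_or_gt f l1 with hfl | hfl
      · obtain ⟨g, rfl⟩ : ∃ g, l1 = f + g := ⟨l1 - f, by omega⟩
        refine ⟨i1 + 2*f, j3, g, by omega, ?_, ?_, hC3,
          le_trans (Nat.mul_le_mul_left q (by omega : g ≤ l2)) hD2⟩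
        · have h := mul_le_mul_left hp2 f
          ring_nf at h hA1 ⊢; linarith
        · have h := mul_le_mul_left hq2 f
          ring_nf at h hB1 ⊢; linarith
      · refine ⟨i3, j3, 0, by omega, ?_, by simpa using hB3, hC3, by simp⟩
        have hi3 : i3 = i1 + f + l1 := by omega
        subst hi3
        have h := mul_le_mul_left hp2 f
        have h2 : k * l1 ≤ k * f := Nat.mul_le_mul_left k (by omega)
        ring_nf at h h2 hA1 ⊢; linarith
  · obtain ⟨e, rfl⟩ : ∃ e, l1 = l2 + e := ⟨l1 - l2, by omega⟩
    have he : 1 ≤ e := by omega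
    rcases lt_or_ge j1 e with hje | hje
    · refine ⟨i2, 0, l2, by omega, by simpa using hA2, ?_, by simp, hD2⟩
      have hi2 : i2 = i1 + j1 + e := by omega
      subst hi2
      have h := mul_le_mul_left hq2 e
      have h2 : k * j1 ≤ k * e := Nat.mul_le_mul_left k (by omega)
      ring_nf at h h2 hB1 ⊢; linarith
    · obtain ⟨j', rfl⟩ : ∃ j', j1 = e + j' := ⟨j1 - e, by omega⟩
      rcases le_or_gt j' j3 with hj | hj
      · refine ⟨i1 + 2*e, j', l2, by omega, ?_, ?_,
          le_trans (Nat.mul_le_mul_left p hj) hC3, hD2⟩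
        · have h := mul_le_mul_left hp2 e
          ring_nf at h hA1 ⊢; linarith
        · have h := mul_le_mul_left hq2 e
          ring_nf at h hB1 ⊢; linarith
      · obtain ⟨f, rfl⟩ : ∃ f, j' = j3 + f := ⟨j' - j3, by omega⟩
        rcases le_or_gt f l2 with hfl | hfl
        · obtain ⟨g, rfl⟩ : ∃ g, l2 = f + g := ⟨l2 - f, by omega⟩
          refine ⟨i1 + 2*e + 2*f, j3, g, by omega, ?_, ?_, hC3,
            le_trans (Nat.mul_le_mul_left q (by omega : g ≤ f + g)) hD2⟩
          · have h := mul_le_mul_left hp2 (e+f)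
            ring_nf at h hA1 ⊢; linarith
          · have h := mul_le_mul_left hq2 (e+f)
            ring_nf at h hB1 ⊢; linarith
        · refine ⟨i3, j3, 0, by omega, ?_, by simpa using hB3, hC3, by simp⟩
          have hi3 : i3 = i1 + 2*e + f + l2 := by omega
          subst hi3
          have h := mul_le_mul_left hp2 (e+f)
          have h2 : k * l2 ≤ k * f := Nat.mul_le_mul_left k (by omega)
          ring_nf at h h2 hA1 ⊢; linarith

section SpanPow

variable {R : Type*} [CommSemiring R]

lemma span_pair_pow (x y : R) (n : ℕ) :
    (Ideal.span {x, y}) ^ n = Ideal.span {w | ∃ i l, i + l = n ∧ w = x ^ i * y ^ l} := by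
  induction n with
  | zero =>
    rw [pow_zero, Ideal.one_eq_top]
    refine le_antisymm ?_ le_top
    rw [← Ideal.span_singleton_one]
    apply Ideal.span_mono
    rintro w rfl
    exact ⟨0, 0, rfl, by simp⟩
  | succ n ih =>
    rw [pow_succ, ih, Ideal.span_mul_span']
    congr 1
    ext w
    constructor
    · rintro ⟨u, ⟨i, l, hil, rfl⟩, v, hv, rfl⟩
      rcases hv with rfl | rfl
      · exact ⟨i + 1, l, by omega, by ring⟩
      · exact ⟨i, l + 1, by omega, by ring⟩
    · rintro ⟨i, l, hil, rfl⟩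
      rcases Nat.eq_zero_or_pos i with rfl | hi
      · obtain ⟨l', rfl⟩ : ∃ l', l = l' + 1 := ⟨l - 1, by omega⟩
        exact ⟨x ^ 0 * y ^ l', ⟨0, l', by omega, rfl⟩, y, by simp, by ring⟩
      · obtain ⟨i', rfl⟩ : ∃ i', i = i' + 1 := ⟨i - 1, by omega⟩
        exact ⟨x ^ i' * y ^ l, ⟨i', l, by omega, rfl⟩, x, by simp, by ring⟩

lemma span_triple_pow (x y z : R) (n : ℕ) :
    (Ideal.span {x, y, z}) ^ n =
      Ideal.span {w | ∃ i j l, i + j + l = n ∧ w = x ^ i * y ^ j * z ^ l} := by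
  induction n with
  | zero =>
    rw [pow_zero, Ideal.one_eq_top]
    refine le_antisymm ?_ le_top
    rw [← Ideal.span_singleton_one]
    apply Ideal.span_mono
    rintro w rfl
    exact ⟨0, 0, 0, rfl, by simp⟩
  | succ n ih =>
    rw [pow_succ, ih, Ideal.span_mul_span']
    congr 1
    ext w
    constructor
    · rintro ⟨u, ⟨i, j, l, hijl, rfl⟩, v, hv, rfl⟩
      rcases hv with rfl | rfl | rfl
      · exact ⟨i + 1, j, l, by omega, by ring⟩
      · exact ⟨i, j + 1, l, by omega, by ring⟩
      · exact ⟨i, j, l + 1, by omega, by ring⟩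
    · rintro ⟨i, j, l, hijl, rfl⟩
      rcases Nat.eq_zero_or_pos i with rfl | hi
      · rcases Nat.eq_zero_or_pos j with rfl | hj
        · obtain ⟨l', rfl⟩ : ∃ l', l = l' + 1 := ⟨l - 1, by omega⟩
          exact ⟨x ^ 0 * y ^ 0 * z ^ l', ⟨0, 0, l', by omega, rfl⟩, z, by simp, by ring⟩
        · obtain ⟨j', rfl⟩ : ∃ j', j = j' + 1 := ⟨j - 1, by omega⟩
          exact ⟨x ^ 0 * y ^ j' * z ^ l, ⟨0, j', l, by omega, rfl⟩, y, by simp, by ring⟩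
      · obtain ⟨i', rfl⟩ : ∃ i', i = i' + 1 := ⟨i - 1, by omega⟩
        exact ⟨x ^ i' * y ^ j * z ^ l, ⟨i', j, l, by omega, rfl⟩, x, by simp, by ring⟩

end SpanPow

section MemPow

variable {K : Type*} [CommSemiring K]

lemma mem_triple_pow (s1 s2 s3 : Fin 4 →₀ ℕ) (n : ℕ) (f : MvPolynomial (Fin 4) K) :
    f ∈ (Ideal.span {monomial s1 (1:K), monomial s2 1, monomial s3 1}) ^ n ↔
      ∀ m ∈ f.support, ∃ i j l, i + j + l = n ∧ i • s1 + j • s2 + l • s3 ≤ m := by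
  rw [span_triple_pow]
  have hset : {w | ∃ i j l, i + j + l = n ∧
        w = (monomial s1 (1:K)) ^ i * (monomial s2 1) ^ j * (monomial s3 1) ^ l} =
      (fun e => monomial e (1:K)) ''
        {e | ∃ i j l, i + j + l = n ∧ e = i • s1 + j • s2 + l • s3} := by
    ext w
    simp only [Set.mem_image, Set.mem_setOf_eq]
    constructor
    · rintro ⟨i, j, l, hs, rfl⟩
      exact ⟨_, ⟨i, j, l, hs, rfl⟩, by simp [monomial_pow, monomial_mul]⟩
    · rintro ⟨e, ⟨i, j, l, hs, rfl⟩, rfl⟩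
      exact ⟨i, j, l, hs, by simp [monomial_pow, monomial_mul]⟩
  rw [hset, mem_ideal_span_monomial_image]
  simp only [Set.mem_setOf_eq]
  constructor
  · intro H m hm
    obtain ⟨e, ⟨i, j, l, hs, rfl⟩, hle⟩ := H m hm
    exact ⟨i, j, l, hs, hle⟩
  · intro H m hm
    obtain ⟨i, j, l, hs, hle⟩ := H m hm
    exact ⟨_, ⟨i, j, l, hs, rfl⟩, hle⟩

lemma mem_pair_pow (s1 s2 : Fin 4 →₀ ℕ) (n : ℕ) (f : MvPolynomial (Fin 4) K) :
    f ∈ (Ideal.span {monomial s1 (1:K), monomial s2 1}) ^ n ↔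
      ∀ m ∈ f.support, ∃ i l, i + l = n ∧ i • s1 + l • s2 ≤ m := by
  rw [span_pair_pow]
  have hset : {w | ∃ i l, i + l = n ∧
        w = (monomial s1 (1:K)) ^ i * (monomial s2 1) ^ l} =
      (fun e => monomial e (1:K)) '' {e | ∃ i l, i + l = n ∧ e = i • s1 + l • s2} := by
    ext w
    simp only [Set.mem_image, Set.mem_setOf_eq]
    constructor
    · rintro ⟨i, l, hs, rfl⟩
      exact ⟨_, ⟨i, l, hs, rfl⟩, by simp [monomial_pow, monomial_mul]⟩
    · rintro ⟨e, ⟨i, l, hs, rfl⟩, rfl⟩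
      exact ⟨i, l, hs, by simp [monomial_pow, monomial_mul]⟩
  rw [hset, mem_ideal_span_monomial_image]
  simp only [Set.mem_setOf_eq]
  constructor
  · intro H m hm
    obtain ⟨e, ⟨i, l, hs, rfl⟩, hle⟩ := H m hm
    exact ⟨i, l, hs, hle⟩
  · intro H m hm
    obtain ⟨i, l, hs, hle⟩ := H m hm
    exact ⟨_, ⟨i, l, hs, rfl⟩, hle⟩

end MemPow

/-- For the weighted edge ideal `I = ((ax)^p, (ab)^k, (by)^q)` of the path `x–a–b–y`
in `K[a,b,x,y]` with `min{p,q} ≥ 2k`, the ordinary `n`-th power of `I` equals its `n`-th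
symbolic power; concretely `I^n = (a^k b^k, a^p, b^q)^n ∩ (a^k, y^q)^n ∩ (b^k, x^p)^n`.
Here `a = X 0`, `b = X 1`, `x = X 2`, `y = X 3`. -/
theorem pow_eq_symbolicPow_path {K : Type*} [Field K] (p q k : ℕ)
    (hp : 0 < p) (hq : 0 < q) (hk : 0 < k) (h : 2 * k ≤ min p q) (n : ℕ) (hn : 1 ≤ n) :
    (Ideal.span ({(X 0) ^ p * (X 2) ^ p, (X 0) ^ k * (X 1) ^ k, (X 1) ^ q * (X 3) ^ q} :
        Set (MvPolynomial (Fin 4) K))) ^ n =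
      (Ideal.span ({(X 0) ^ k * (X 1) ^ k, (X 0) ^ p, (X 1) ^ q} :
          Set (MvPolynomial (Fin 4) K))) ^ n ⊓
        (Ideal.span ({(X 0) ^ k, (X 3) ^ q} : Set (MvPolynomial (Fin 4) K))) ^ n ⊓
        (Ideal.span ({(X 1) ^ k, (X 2) ^ p} : Set (MvPolynomial (Fin 4) K))) ^ n := by
  have hp2 : 2 * k ≤ p := le_trans h (min_le_left p q)
  have hq2 : 2 * k ≤ q := le_trans h (min_le_right p q)
  have hkp : k ≤ p := by omega
  have hkq : k ≤ q := by omega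
  have hxp : (X 0 : MvPolynomial (Fin 4) K) ^ k * X 0 ^ (p - k) = X 0 ^ p := by
    rw [← pow_add]; congr 1; omega
  have hxq : (X 1 : MvPolynomial (Fin 4) K) ^ k * X 1 ^ (q - k) = X 1 ^ q := by
    rw [← pow_add]; congr 1; omega
  refine le_antisymm (le_inf (le_inf ?_ ?_) ?_) ?_
  · -- I ≤ J1
    refine Ideal.pow_right_mono (Ideal.span_le.mpr ?_) n
    intro g hg
    simp only [Set.mem_insert_iff, Set.mem_singleton_iff] at hg
    rcases hg with rfl | rfl | rfl
    · exact Ideal.mul_mem_right _ _ (Ideal.subset_span (by simp))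
    · exact Ideal.subset_span (by simp)
    · exact Ideal.mul_mem_right _ _ (Ideal.subset_span (by simp))
  · -- I ≤ J2 = (a^k, y^q)
    refine Ideal.pow_right_mono (Ideal.span_le.mpr ?_) n
    intro g hg
    simp only [Set.mem_insert_iff, Set.mem_singleton_iff] at hg
    rcases hg with rfl | rfl | rfl
    · rw [← hxp, mul_assoc]
      exact Ideal.mul_mem_right _ _ (Ideal.subset_span (by simp))
    · exact Ideal.mul_mem_right _ _ (Ideal.subset_span (by simp))
    · exact Ideal.mul_mem_left _ _ (Ideal.subset_span (by simp))
  · -- I ≤ J3 = (b^k, x^p)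
    refine Ideal.pow_right_mono (Ideal.span_le.mpr ?_) n
    intro g hg
    simp only [Set.mem_insert_iff, Set.mem_singleton_iff] at hg
    rcases hg with rfl | rfl | rfl
    · exact Ideal.mul_mem_left _ _ (Ideal.subset_span (by simp))
    · exact Ideal.mul_mem_left _ _ (Ideal.subset_span (by simp))
    · rw [← hxq, mul_assoc]
      exact Ideal.mul_mem_right _ _ (Ideal.subset_span (by simp))
  · -- hard direction
    intro f hf
    rw [Submodule.mem_inf, Submodule.mem_inf] at hf
    obtain ⟨⟨h1, h2⟩, h3⟩ := hf
    have e1 : (X 0 : MvPolynomial (Fin 4) K) ^ p * X 2 ^ p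
        = monomial (Finsupp.single 0 p + Finsupp.single 2 p) 1 := by
      rw [X_pow_eq_monomial, X_pow_eq_monomial, monomial_mul, one_mul]
    have e2 : (X 0 : MvPolynomial (Fin 4) K) ^ k * X 1 ^ k
        = monomial (Finsupp.single 0 k + Finsupp.single 1 k) 1 := by
      rw [X_pow_eq_monomial, X_pow_eq_monomial, monomial_mul, one_mul]
    have e3 : (X 1 : MvPolynomial (Fin 4) K) ^ q * X 3 ^ q
        = monomial (Finsupp.single 1 q + Finsupp.single 3 q) 1 := by
      rw [X_pow_eq_monomial, X_pow_eq_monomial, monomial_mul, one_mul]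
    rw [e2, X_pow_eq_monomial, X_pow_eq_monomial, mem_triple_pow] at h1
    rw [X_pow_eq_monomial, X_pow_eq_monomial, mem_pair_pow] at h2
    rw [X_pow_eq_monomial, X_pow_eq_monomial, mem_pair_pow] at h3
    rw [e1, e2, e3, mem_triple_pow]
    intro m hm
    obtain ⟨i1, j1, l1, hs1, hle1⟩ := h1 m hm
    obtain ⟨i2, l2, hs2, hle2⟩ := h2 m hm
    obtain ⟨i3, j3, hs3, hle3⟩ := h3 m hm
    have hA1 := Finsupp.le_def.mp hle1 0
    have hB1 := Finsupp.le_def.mp hle1 1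
    have hA2 := Finsupp.le_def.mp hle2 0
    have hD2 := Finsupp.le_def.mp hle2 3
    have hB3 := Finsupp.le_def.mp hle3 1
    have hC3 := Finsupp.le_def.mp hle3 2
    simp (config := { decide := true }) [Finsupp.single_apply]
      at hA1 hB1 hA2 hD2 hB3 hC3
    obtain ⟨i, j, l, hsum, gA, gB, gC, gD⟩ :=
      key_arith k p q n (m 0) (m 1) (m 2) (m 3) i1 j1 l1 i2 l2 i3 j3 hp2 hq2 hs1
        (by linarith) (by linarith) hs2 (by linarith) (by linarith) hs3
        (by linarith) (by linarith)
    refine ⟨j, i, l, by omega, ?_⟩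
    rw [Finsupp.le_def]
    intro a
    fin_cases a <;>
      simp (config := { decide := true }) [Finsupp.single_apply] <;> linarith
end
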